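/- Let R be a commutative ring with 1 and τ a symmetric relation on R^# that is refinable and associate preserving. If R is a τ-atomic-HFR (R is τ-atomic and any two τ-atomic factorizations of a nonunit have the same length), then R is a τ-BFR (for every nonunit a there is N(a) ∈ ℕ such that every τ-factorization of a has length at most N(a)). -/

import Mathlib

universe u

variable {R : Type u} [CommRing R]

/-- `a ∈ R^#`, i.e. `a` is a nonzero nonunit of `R`. -/
def IsNnu (a : R) : Prop :=
  a ≠ 0 ∧ ¬IsUnit a

/-- `a ∼ b` iff `(a) = (b)`. -/
def RAssoc (a b : R) : Prop :=
  Ideal.span ({a} : Set R) = Ideal.span ({b} : Set R)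

/-- `a ≈ b` iff `a = λ * b` for some unit `λ`. -/
def RSAssoc (a b : R) : Prop :=
  ∃ lam : Rˣ, a = (lam : R) * b

/-- `a ≅ b` iff `a ∼ b` and (`a = b = 0`, or whenever `a = r * b` then `r` is a unit). -/
def RVSAssoc (a b : R) : Prop :=
  RAssoc a b ∧ ((a = 0 ∧ b = 0) ∨ ∀ r : R, a = r * b → IsUnit r)

/-- `a = u * a₁ ⋯ aₙ` (with `l = [a₁, …, aₙ]`) is a `τ`-factorization of `a`:
the list of factors is nonempty, all factors are nonunits, all factors are nonzero
except in the trivial `τ`-factorization `0 = u * 0` of `0`, and the factors are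
pairwise related by `τ`. -/
def IsTauFact (τ : R → R → Prop) (u : Rˣ) (l : List R) (a : R) : Prop :=
  l ≠ [] ∧ (∀ x ∈ l, ¬IsUnit x) ∧ (∀ x ∈ l, x = 0 → l = [0]) ∧
    l.Pairwise τ ∧ a = (u : R) * l.prod

/-- `b` τ-divides `a`, i.e. `b` occurs as a factor in some τ-factorization of `a`. -/
def TauDvd (τ : R → R → Prop) (b a : R) : Prop :=
  ∃ (u : Rˣ) (l : List R), IsTauFact τ u l a ∧ b ∈ l

/-- `a` is τ-irreducible: `a` is a nonunit and every τ-factorization of `a`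
has a factor `∼ a`. -/
def TauIrreducible (τ : R → R → Prop) (a : R) : Prop :=
  ¬IsUnit a ∧ ∀ (u : Rˣ) (l : List R), IsTauFact τ u l a → ∃ x ∈ l, RAssoc a x

/-- `a` is τ-strongly irreducible: `a` is a nonunit and every τ-factorization of `a`
has a factor `≈ a`. -/
def TauSIrreducible (τ : R → R → Prop) (a : R) : Prop :=
  ¬IsUnit a ∧ ∀ (u : Rˣ) (l : List R), IsTauFact τ u l a → ∃ x ∈ l, RSAssoc a x

/-- `a` is τ-m-irreducible: `a` is a nonunit and in every τ-factorization of `a`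
every factor is `∼ a`. -/
def TauMIrreducible (τ : R → R → Prop) (a : R) : Prop :=
  ¬IsUnit a ∧ ∀ (u : Rˣ) (l : List R), IsTauFact τ u l a → ∀ x ∈ l, RAssoc a x

/-- `a` is τ-very strongly irreducible: `a` is a nonunit, `a ≅ a`, and `a` has
no nontrivial τ-factorizations. -/
def TauVSIrreducible (τ : R → R → Prop) (a : R) : Prop :=
  ¬IsUnit a ∧ RVSAssoc a a ∧ ∀ (u : Rˣ) (l : List R), IsTauFact τ u l a → l.length = 1

/-- `R` is τ-atomic: every nonunit has a τ-factorization into τ-irreducible factors. -/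
def TauAtomic (τ : R → R → Prop) : Prop :=
  ∀ a : R, ¬IsUnit a → ∃ (u : Rˣ) (l : List R),
    IsTauFact τ u l a ∧ ∀ x ∈ l, TauIrreducible τ x

/-- `τ` is refinable: replacing each factor of a τ-factorization by the factors of a
τ-factorization of it (absorbing the units into the leading unit) again yields a
τ-factorization. -/
def TauRefinable (τ : R → R → Prop) : Prop :=
  ∀ (a : R) (u : Rˣ) (l : List R), IsTauFact τ u l a →
    ∀ L : List (Rˣ × List R),
      List.Forall₂ (fun x p => IsTauFact τ p.1 p.2 x) l L →
      IsTauFact τ (u * (L.map Prod.fst).prod) (L.map Prod.snd).flatten a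

/-- `τ` is associate preserving. -/
def TauAssocPreserving (τ : R → R → Prop) : Prop :=
  ∀ a b b' : R, IsNnu b' → RAssoc b b' → τ a b → τ a b'

/-- `R` satisfies τ-ACCP: every ascending chain of principal ideals
`(a₀) ⊆ (a₁) ⊆ ⋯` with `a_{i+1} |_τ a_i` stabilizes. -/
def TauACCP (τ : R → R → Prop) : Prop :=
  ∀ f : ℕ → R,
    (∀ i, Ideal.span ({f i} : Set R) ≤ Ideal.span ({f (i + 1)} : Set R)) →
    (∀ i, TauDvd τ (f (i + 1)) (f i)) →
    ∃ N : ℕ, ∀ i, N ≤ i → Ideal.span ({f i} : Set R) = Ideal.span ({f N} : Set R)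

lemma exists_atomic_refinement (τ : R → R → Prop) (hatomic : TauAtomic τ) :
    ∀ l : List R, (∀ x ∈ l, ¬IsUnit x) → ∃ L : List (Rˣ × List R),
      List.Forall₂ (fun x p => IsTauFact τ p.1 p.2 x) l L ∧
      ∀ p ∈ L, ∀ y ∈ p.2, TauIrreducible τ y := by
  intro l
  induction l with
  | nil => exact fun _ => ⟨[], List.Forall₂.nil, by simp⟩
  | cons x xs ih =>
    intro h
    obtain ⟨L', hL', hI'⟩ := ih (fun y hy => h y (List.mem_cons_of_mem _ hy))
    obtain ⟨ux, lx, hfx, hix⟩ := hatomic x (h x List.mem_cons_self)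
    refine ⟨(ux, lx) :: L', List.Forall₂.cons hfx hL', ?_⟩
    intro p hp y hyp
    rcases List.mem_cons.mp hp with rfl | hp
    · exact hix y hyp
    · exact hI' p hp y hyp

lemma length_le_flatten_aux {l : List R} {L : List (Rˣ × List R)}
    (h : List.Forall₂ (fun _ p => p.2 ≠ ([] : List R)) l L) :
    l.length ≤ (L.map Prod.snd).flatten.length := by
  induction h with
  | nil => simp
  | @cons x p xs L' hp _ ih =>
    simp only [List.map_cons, List.flatten_cons, List.length_append, List.length_cons]
    have := List.length_pos_iff.mpr hp
    omega

/-- For `τ` refinable and associate preserving: if `R` is a τ-atomic-HFR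
(τ-atomic, and any two τ-atomic factorizations of a nonunit have the same length),
then `R` is a τ-BFR. -/
theorem tau_HFR_implies_BFR (τ : R → R → Prop)
    (hτ : ∀ a b : R, τ a b → IsNnu a ∧ IsNnu b)
    (hsym : ∀ a b : R, τ a b → τ b a)
    (href : TauRefinable τ) (hap : TauAssocPreserving τ)
    (hatomic : TauAtomic τ)
    (hhfr : ∀ a : R, ¬IsUnit a → ∀ (u u' : Rˣ) (l l' : List R),
      IsTauFact τ u l a → (∀ x ∈ l, TauIrreducible τ x) →
      IsTauFact τ u' l' a → (∀ x ∈ l', TauIrreducible τ x) →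
      l.length = l'.length) :
    ∀ a : R, ¬IsUnit a → ∃ N : ℕ, ∀ (u : Rˣ) (l : List R),
      IsTauFact τ u l a → l.length ≤ N := by
  intro a ha
  obtain ⟨u0, l0, hfact0, hirr0⟩ := hatomic a ha
  refine ⟨l0.length, ?_⟩
  intro u l hfact
  obtain ⟨L, hL, hLirr⟩ := exists_atomic_refinement τ hatomic l hfact.2.1
  have hbig := href a u l hfact L hL
  have hirrflat : ∀ x ∈ (L.map Prod.snd).flatten, TauIrreducible τ x := by
    intro x hx
    simp only [List.mem_flatten, List.mem_map] at hx
    obtain ⟨l', ⟨p, hp, rfl⟩, hxl⟩ := hx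
    exact hLirr p hp x hxl
  have hlen := hhfr a ha u0 _ l0 _ hfact0 hirr0 hbig hirrflat
  have hle : l.length ≤ (L.map Prod.snd).flatten.length :=
    length_le_flatten_aux (hL.imp fun _ _ hf => hf.1)
  omega
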